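/- Let d > 0, a ≠ 0 and c real, set κ = 1 + c/√(2d), assume κ + 1 ≠ 0 and κ² − 4a√(2d)/(κ+1) ≥ 0, and set s = √(κ² − 4a√(2d)/(κ+1)). For σ ∈ {+1, −1}, define B = a/(1 + κ), α = κ + σ·s, and f(x) = x − ((κ+1)/(2a))·(−κ + σ·s). Then for every x ∈ ℝ, x²·f″(x) + 2(Bx² + κx + √(2d))·f′(x) − 2B·x·f(x) = α·f(x). -/

import Mathlib

/-- n = 1 QES sector of the inverse quartic power potential: the
Stäckel-transformed operator has eigenvalues `α = κ ± s` with
`s = √(κ² - 4a√(2d)/(κ+1))`, `κ = 1 + c/√(2d)`, `B = a/(1+κ)`, and linear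
polynomial eigenfunctions. -/
theorem inverse_quartic_n1 (d a c : ℝ) (hd : 0 < d) (ha : a ≠ 0)
    (κ : ℝ) (hκ : κ = 1 + c / Real.sqrt (2 * d)) (hκ1 : κ + 1 ≠ 0)
    (hnonneg : 0 ≤ κ ^ 2 - 4 * a * Real.sqrt (2 * d) / (κ + 1))
    (s : ℝ) (hs : s = Real.sqrt (κ ^ 2 - 4 * a * Real.sqrt (2 * d) / (κ + 1)))
    (σ : ℝ) (hσ : σ = 1 ∨ σ = -1)
    (B α : ℝ) (hB : B = a / (1 + κ)) (hα : α = κ + σ * s)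
    (f : ℝ → ℝ)
    (hf : f = fun x : ℝ => x - ((κ + 1) / (2 * a)) * (-κ + σ * s))
    (x : ℝ) :
    x ^ 2 * deriv (deriv f) x
      + 2 * (B * x ^ 2 + κ * x + Real.sqrt (2 * d)) * deriv f x
      - 2 * B * x * f x
    = α * f x := by
  have hd1 : deriv f = fun _ => (1:ℝ) := by
    subst hf; funext y; simp
  have hd2 : deriv (deriv f) = fun _ => (0:ℝ) := by
    rw [hd1]; funext y; simp
  have hs2 : s ^ 2 = κ ^ 2 - 4 * a * Real.sqrt (2 * d) / (κ + 1) := by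
    rw [hs, sq, Real.mul_self_sqrt hnonneg]
  have hσ2 : σ ^ 2 = 1 := by rcases hσ with h | h <;> simp [h]
  subst hf hB hα
  rw [hd2, hd1]
  simp only
  have h1κ : 1 + κ ≠ 0 := by rwa [add_comm] at hκ1
  have hs2' : s ^ 2 * (κ + 1) = κ ^ 2 * (κ + 1) - 4 * a * Real.sqrt (2 * d) := by
    rw [hs2]; field_simp
  set S := Real.sqrt (2 * d) with hS
  field_simp
  linear_combination ((1 + κ) ^ 2 * s ^ 2) * hσ2 + (1 + κ) * hs2'
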